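/- Let T > 0, let A : [0,T] → Mₙ(ℝ) and B : [0,T] → M_{n×k}(ℝ) be continuous, and let Φ : [0,T] → Mₙ(ℝ) be differentiable with Φ(0) = I, Φ'(t) = A(t) Φ(t) for all t ∈ [0,T], and Φ(t) invertible for every t ∈ [0,T]; write Γ(s,t) := Φ(t) Φ(s)⁻¹. Let ℓ : [0,T] → ℝⁿ, m : [0,T] → ℝᵏ, and v : [0,T] → ℝᵏ be continuous, and let δ : [0,T] → ℝⁿ be differentiable with δ(0) = 0 and δ'(t) = A(t) δ(t) + B(t) v(t) for all t ∈ [0,T]. Then ∫₀ᵀ ( ⟨ℓ(t), δ(t)⟩ + ⟨m(t), v(t)⟩ ) dt = ∫₀ᵀ ⟨ B(s)ᵀ ( ∫ₛᵀ Γ(s,t)ᵀ ℓ(t) dt ) + m(s), v(s) ⟩ ds. -/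

import Mathlib

open scoped Matrix
open Set intervalIntegral MeasureTheory

attribute [local instance] Matrix.normedAddCommGroup Matrix.normedSpace


private lemma matrix_entry_hasDerivWithinAt {p q : ℕ}
    {M : ℝ → Matrix (Fin p) (Fin q) ℝ} {M' : Matrix (Fin p) (Fin q) ℝ}
    {s : Set ℝ} {x : ℝ} (hM : HasDerivWithinAt M M' s x) (i : Fin p) (j : Fin q) :
    HasDerivWithinAt (fun t => M t i j) (M' i j) s x := by
  exact (hasDerivWithinAt_pi.mp ((hasDerivWithinAt_pi.mp hM) i)) j

private lemma hasDerivWithinAt_mulVec' {p q : ℕ}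
    {M : ℝ → Matrix (Fin p) (Fin q) ℝ} {M' : Matrix (Fin p) (Fin q) ℝ}
    {y : ℝ → Fin q → ℝ} {y' : Fin q → ℝ} {s : Set ℝ} {x : ℝ}
    (hM : HasDerivWithinAt M M' s x) (hy : HasDerivWithinAt y y' s x) :
    HasDerivWithinAt (fun t => M t *ᵥ y t) (M' *ᵥ y x + M x *ᵥ y') s x := by
  rw [hasDerivWithinAt_pi]
  intro i
  have h : HasDerivWithinAt (fun t => ∑ j, M t i j * y t j)
      (∑ j, (M' i j * y x j + M x i j * y' j)) s x :=
    HasDerivWithinAt.fun_sum (fun j _ =>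
      (matrix_entry_hasDerivWithinAt hM i j).mul (hasDerivWithinAt_pi.mp hy j))
  simpa [Matrix.mulVec, dotProduct, Finset.sum_add_distrib] using h

private lemma hasDerivWithinAt_dot' {q : ℕ}
    {u : ℝ → Fin q → ℝ} {u' : Fin q → ℝ}
    {y : ℝ → Fin q → ℝ} {y' : Fin q → ℝ} {s : Set ℝ} {x : ℝ}
    (hu : HasDerivWithinAt u u' s x) (hy : HasDerivWithinAt y y' s x) :
    HasDerivWithinAt (fun t => u t ⬝ᵥ y t) (u' ⬝ᵥ y x + u x ⬝ᵥ y') s x := by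
  have h : HasDerivWithinAt (fun t => ∑ j, u t j * y t j)
      (∑ j, (u' j * y x j + u x j * y' j)) s x :=
    HasDerivWithinAt.fun_sum (fun j _ =>
      (hasDerivWithinAt_pi.mp hu j).mul (hasDerivWithinAt_pi.mp hy j))
  simpa [dotProduct, Finset.sum_add_distrib] using h

private lemma continuousOn_mulVec' {p q : ℕ}
    {M : ℝ → Matrix (Fin p) (Fin q) ℝ} {y : ℝ → Fin q → ℝ} {s : Set ℝ}
    (hM : ContinuousOn M s) (hy : ContinuousOn y s) :
    ContinuousOn (fun t => M t *ᵥ y t) s := by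
  rw [continuousOn_pi]
  intro i
  have h : ContinuousOn (fun t => ∑ j, M t i j * y t j) s := by
    apply continuousOn_finset_sum
    intro j _
    exact ((continuousOn_pi.mp ((continuousOn_pi.mp hM) i)) j).mul (continuousOn_pi.mp hy j)
  simpa [Matrix.mulVec, dotProduct] using h

private lemma continuousOn_dot' {q : ℕ}
    {u y : ℝ → Fin q → ℝ} {s : Set ℝ}
    (hu : ContinuousOn u s) (hy : ContinuousOn y s) :
    ContinuousOn (fun t => u t ⬝ᵥ y t) s := by
  have h : ContinuousOn (fun t => ∑ j, u t j * y t j) s := by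
    apply continuousOn_finset_sum
    intro j _
    exact (continuousOn_pi.mp hu j).mul (continuousOn_pi.mp hy j)
  simpa [dotProduct] using h

private lemma continuousOn_transpose' {p q : ℕ}
    {M : ℝ → Matrix (Fin p) (Fin q) ℝ} {s : Set ℝ} (hM : ContinuousOn M s) :
    ContinuousOn (fun t => (M t)ᵀ) s := by
  refine continuousOn_pi.mpr ?_
  intro j
  rw [continuousOn_pi]
  intro i
  exact (continuousOn_pi.mp ((continuousOn_pi.mp hM) i)) j

private lemma norm_mulVec_le' {p q : ℕ} (M : Matrix (Fin p) (Fin q) ℝ) (z : Fin q → ℝ) :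
    ‖M *ᵥ z‖ ≤ (q : ℝ) * ‖M‖ * ‖z‖ := by
  have hnn : (0:ℝ) ≤ (q : ℝ) * ‖M‖ * ‖z‖ := by positivity
  rw [pi_norm_le_iff_of_nonneg hnn]
  intro i
  calc ‖(M *ᵥ z) i‖ = |∑ j, M i j * z j| := by simp [Matrix.mulVec, dotProduct]
    _ ≤ ∑ j, |M i j * z j| := Finset.abs_sum_le_sum_abs _ _
    _ ≤ ∑ _j : Fin q, ‖M‖ * ‖z‖ := by
        apply Finset.sum_le_sum
        intro j _
        rw [abs_mul]
        exact mul_le_mul (M.norm_entry_le_entrywise_sup_norm)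
          (norm_le_pi_norm z j) (abs_nonneg _) (norm_nonneg _)
    _ = (q : ℝ) * ‖M‖ * ‖z‖ := by simp [Finset.sum_const, mul_assoc]



/-- Deterministic core of the paper's Theorem 2: if `Φ` is the invertible fundamental
solution of `Φ' = A Φ`, `Γ(s,t) := Φ(t) Φ(s)⁻¹`, and `δ` solves
`δ'(t) = A(t) δ(t) + B(t) v(t)`, `δ(0) = 0`, on `[0,T]`, then
`∫₀ᵀ (⟨ℓ(t), δ(t)⟩ + ⟨m(t), v(t)⟩) dt
  = ∫₀ᵀ ⟨ B(s)ᵀ (∫ₛᵀ Γ(s,t)ᵀ ℓ(t) dt) + m(s), v(s) ⟩ ds`. -/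
theorem first_variation_kernel_vector
    (T : ℝ) (hT : 0 < T) {n k : ℕ}
    (A : ℝ → Matrix (Fin n) (Fin n) ℝ) (hA : ContinuousOn A (Set.Icc 0 T))
    (B : ℝ → Matrix (Fin n) (Fin k) ℝ) (hB : ContinuousOn B (Set.Icc 0 T))
    (Φ : ℝ → Matrix (Fin n) (Fin n) ℝ)
    (hΦ0 : Φ 0 = 1)
    (hΦ : ∀ t ∈ Set.Icc (0 : ℝ) T,
      HasDerivWithinAt Φ (A t * Φ t) (Set.Icc 0 T) t)
    (hΦinv : ∀ t ∈ Set.Icc (0 : ℝ) T, IsUnit (Φ t))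
    (ℓ : ℝ → Fin n → ℝ) (hℓ : ContinuousOn ℓ (Set.Icc 0 T))
    (m : ℝ → Fin k → ℝ) (hm : ContinuousOn m (Set.Icc 0 T))
    (v : ℝ → Fin k → ℝ) (hv : ContinuousOn v (Set.Icc 0 T))
    (δ : ℝ → Fin n → ℝ)
    (hδ0 : δ 0 = 0)
    (hδ : ∀ t ∈ Set.Icc (0 : ℝ) T,
      HasDerivWithinAt δ (A t *ᵥ δ t + B t *ᵥ v t) (Set.Icc 0 T) t) :
    ∫ t in (0 : ℝ)..T, (ℓ t ⬝ᵥ δ t + m t ⬝ᵥ v t) =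
      ∫ s in (0 : ℝ)..T,
        ((B s)ᵀ *ᵥ (∫ t in s..T, (Φ t * (Φ s)⁻¹)ᵀ *ᵥ ℓ t) + m s) ⬝ᵥ v s := by
  have hT' : (0:ℝ) ≤ T := hT.le
  have huIcc : Set.uIcc (0:ℝ) T = Set.Icc 0 T := Set.uIcc_of_le hT'
  -- continuity facts
  have hΦc : ContinuousOn Φ (Set.Icc 0 T) := fun t ht => (hΦ t ht).continuousWithinAt
  have hδc : ContinuousOn δ (Set.Icc 0 T) := fun t ht => (hδ t ht).continuousWithinAt
  have hdet : ∀ t ∈ Set.Icc (0:ℝ) T, IsUnit (Φ t).det :=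
    fun t ht => (Matrix.isUnit_iff_isUnit_det _).mp (hΦinv t ht)
  set Ψ : ℝ → Matrix (Fin n) (Fin n) ℝ := fun s => (Φ s)⁻¹ with hΨdef
  have hΦΨ : ∀ t ∈ Set.Icc (0:ℝ) T, Φ t * Ψ t = 1 :=
    fun t ht => Matrix.mul_nonsing_inv _ (hdet t ht)
  have hΨc : ContinuousOn Ψ (Set.Icc 0 T) := by
    have h1 : ContinuousOn (fun s => (Φ s).det) (Set.Icc 0 T) :=
      Continuous.comp_continuousOn (continuous_id.matrix_det) hΦc
    have h2 : ContinuousOn (fun s => ((Φ s).det)⁻¹) (Set.Icc 0 T) :=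
      h1.inv₀ (fun t ht => (hdet t ht).ne_zero)
    have h3 : ContinuousOn (fun s => (Φ s).adjugate) (Set.Icc 0 T) := by
      have : Continuous (fun M : Matrix (Fin n) (Fin n) ℝ => M.adjugate) :=
        Continuous.matrix_adjugate continuous_id
      exact this.comp_continuousOn hΦc
    have h4 : ContinuousOn (fun s => ((Φ s).det)⁻¹ • (Φ s).adjugate) (Set.Icc 0 T) := h2.smul h3
    refine h4.congr fun s hs => ?_
    rw [hΨdef]
    simp only [Matrix.inv_def, Ring.inverse_eq_inv']
  -- the integrand for w
  set fw : ℝ → Fin n → ℝ := fun s => Ψ s *ᵥ (B s *ᵥ v s) with hfwdef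
  have hfwc : ContinuousOn fw (Set.Icc 0 T) :=
    continuousOn_mulVec' hΨc (continuousOn_mulVec' hB hv)
  set w : ℝ → Fin n → ℝ := fun x => ∫ s in (0:ℝ)..x, fw s with hwdef
  have hfwint : ∀ a b : ℝ, a ∈ Set.Icc (0:ℝ) T → b ∈ Set.Icc (0:ℝ) T →
      IntervalIntegrable fw volume a b := by
    intro a b ha hb
    refine (hfwc.mono ?_).intervalIntegrable
    rw [← huIcc]
    exact Set.uIcc_subset_uIcc (by rw [huIcc]; exact ha) (by rw [huIcc]; exact hb)
  have hwc : ContinuousOn w (Set.Icc 0 T) := by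
    rw [← huIcc]
    exact intervalIntegral.continuousOn_primitive_interval
      (by rw [huIcc]; exact hfwc.integrableOn_compact isCompact_Icc)
  have hw0 : w 0 = 0 := intervalIntegral.integral_same
  -- right derivative of w on Ico
  have hmemIoi : ∀ t ∈ Set.Ico (0:ℝ) T, Set.Icc (0:ℝ) T ∈ nhdsWithin t (Set.Ioi t) := by
    intro t ht
    exact Filter.mem_of_superset (Ioc_mem_nhdsGT_of_mem ⟨le_refl t, ht.2⟩)
      (fun x hx => ⟨le_trans ht.1 hx.1.le, hx.2⟩)
  have hmemIci : ∀ t ∈ Set.Ico (0:ℝ) T, Set.Icc (0:ℝ) T ∈ nhdsWithin t (Set.Ici t) := by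
    intro t ht
    exact Filter.mem_of_superset (Icc_mem_nhdsGE_of_mem ⟨le_refl t, ht.2⟩)
      (fun x hx => ⟨le_trans ht.1 hx.1, hx.2⟩)
  have hsmaf : ∀ t ∈ Set.Ico (0:ℝ) T, StronglyMeasurableAtFilter fw (nhdsWithin t (Set.Ioi t)) volume :=
    fun t ht => ⟨Set.Icc 0 T, hmemIoi t ht, hfwc.aestronglyMeasurable measurableSet_Icc⟩
  have hw' : ∀ t ∈ Set.Ico (0:ℝ) T, HasDerivWithinAt w (fw t) (Set.Ici t) t := by
    intro t ht
    exact intervalIntegral.integral_hasDerivWithinAt_right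
      (hfwint 0 t ⟨le_refl 0, hT'⟩ ⟨ht.1, ht.2.le⟩) (hsmaf t ht)
      ((hfwc t ⟨ht.1, ht.2.le⟩).mono_of_mem_nhdsWithin (hmemIoi t ht))
  -- η = Φ *ᵥ w solves the same ODE as δ
  set η : ℝ → Fin n → ℝ := fun t => Φ t *ᵥ w t with hηdef
  have hηc : ContinuousOn η (Set.Icc 0 T) := continuousOn_mulVec' hΦc hwc
  have hη0 : η 0 = 0 := by simp [hηdef, hw0]
  have hη' : ∀ t ∈ Set.Ico (0:ℝ) T,
      HasDerivWithinAt η (A t *ᵥ η t + B t *ᵥ v t) (Set.Ici t) t := by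
    intro t ht
    have htI : t ∈ Set.Icc (0:ℝ) T := ⟨ht.1, ht.2.le⟩
    have h1 : HasDerivWithinAt Φ (A t * Φ t) (Set.Ici t) t :=
      (hΦ t htI).mono_of_mem_nhdsWithin (hmemIci t ht)
    have h2 := hasDerivWithinAt_mulVec' h1 (hw' t ht)
    have heq : (A t * Φ t) *ᵥ w t + Φ t *ᵥ fw t = A t *ᵥ η t + B t *ᵥ v t := by
      rw [hηdef]
      simp only [hfwdef]
      rw [Matrix.mulVec_mulVec, Matrix.mulVec_mulVec, Matrix.mulVec_mulVec,
        hΦΨ t htI, Matrix.one_mul]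
    rw [← heq]
    exact h2
  -- uniqueness: δ = η on Icc
  obtain ⟨C, hC⟩ := isCompact_Icc.exists_bound_of_continuousOn hA
  set clamp : ℝ → ℝ := fun t => max 0 (min t T) with hclampdef
  have hclampI : ∀ t, clamp t ∈ Set.Icc (0:ℝ) T :=
    fun t => ⟨le_max_left _ _, max_le hT' (min_le_right _ _)⟩
  have hclampeq : ∀ t ∈ Set.Icc (0:ℝ) T, clamp t = t := by
    intro t ht
    rw [hclampdef]
    simp only [min_eq_left ht.2, max_eq_right ht.1]
  set vode : ℝ → (Fin n → ℝ) → (Fin n → ℝ) :=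
    fun t x => A (clamp t) *ᵥ x + B (clamp t) *ᵥ v (clamp t) with hvodedef
  set K : NNReal := Real.toNNReal ((n : ℝ) * C) with hKdef
  have hlip : ∀ t, LipschitzOnWith K (vode t) Set.univ := by
    intro t
    rw [lipschitzOnWith_iff_dist_le_mul]
    intro x _ y _
    have : vode t x - vode t y = A (clamp t) *ᵥ (x - y) := by
      simp [hvodedef, Matrix.mulVec_sub]
    rw [dist_eq_norm, dist_eq_norm, this]
    calc ‖A (clamp t) *ᵥ (x - y)‖ ≤ (n : ℝ) * ‖A (clamp t)‖ * ‖x - y‖ := norm_mulVec_le' _ _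
      _ ≤ (n : ℝ) * C * ‖x - y‖ := by
          apply mul_le_mul_of_nonneg_right _ (norm_nonneg _)
          exact mul_le_mul_of_nonneg_left (hC _ (hclampI t)) (Nat.cast_nonneg n)
      _ ≤ (K : ℝ) * ‖x - y‖ := by
          apply mul_le_mul_of_nonneg_right _ (norm_nonneg _)
          exact Real.le_coe_toNNReal _
  have hδη : Set.EqOn δ η (Set.Icc 0 T) := by
    apply ODE_solution_unique_of_mem_Icc_right (fun t _ => hlip t) hδc ?_ (fun t _ => trivial)
      hηc ?_ (fun t _ => trivial) (by rw [hδ0, hη0])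
    · intro t ht
      have htI : t ∈ Set.Icc (0:ℝ) T := ⟨ht.1, ht.2.le⟩
      have := (hδ t htI).mono_of_mem_nhdsWithin (hmemIci t ht)
      simpa [hvodedef, hclampeq t htI] using this
    · intro t ht
      have htI : t ∈ Set.Icc (0:ℝ) T := ⟨ht.1, ht.2.le⟩
      have := hη' t ht
      simpa [hvodedef, hclampeq t htI] using this
  -- costate integrand and F
  set fℓ : ℝ → Fin n → ℝ := fun t => (Φ t)ᵀ *ᵥ ℓ t with hfℓdef
  have hfℓc : ContinuousOn fℓ (Set.Icc 0 T) :=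
    continuousOn_mulVec' (continuousOn_transpose' hΦc) hℓ
  have hfℓint : ∀ a b : ℝ, a ∈ Set.Icc (0:ℝ) T → b ∈ Set.Icc (0:ℝ) T →
      IntervalIntegrable fℓ volume a b := by
    intro a b ha hb
    refine (hfℓc.mono ?_).intervalIntegrable
    rw [← huIcc]
    exact Set.uIcc_subset_uIcc (by rw [huIcc]; exact ha) (by rw [huIcc]; exact hb)
  set F : ℝ → Fin n → ℝ := fun s => ∫ t in s..T, fℓ t with hFdef
  have hFT : F T = 0 := intervalIntegral.integral_same
  have hFc : ContinuousOn F (Set.Icc 0 T) := by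
    have hprim : ContinuousOn (fun x => ∫ t in (0:ℝ)..x, fℓ t) (Set.Icc 0 T) := by
      rw [← huIcc]
      exact intervalIntegral.continuousOn_primitive_interval
        (by rw [huIcc]; exact hfℓc.integrableOn_compact isCompact_Icc)
    have : ContinuousOn (fun s => (∫ t in (0:ℝ)..T, fℓ t) - ∫ t in (0:ℝ)..s, fℓ t)
        (Set.Icc 0 T) := continuousOn_const.sub hprim
    refine this.congr fun s hs => ?_
    rw [hFdef]
    rw [eq_sub_iff_add_eq]
    rw [add_comm]
    exact intervalIntegral.integral_add_adjacent_intervals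
      (hfℓint 0 s ⟨le_refl 0, hT'⟩ hs) (hfℓint s T hs ⟨hT', le_refl T⟩)
  -- derivatives of F and w at interior points
  have hF' : ∀ s ∈ Set.Ioo (0:ℝ) T, HasDerivAt F (-(fℓ s)) s := by
    intro s hs
    have hmem : Set.Icc (0:ℝ) T ∈ nhds s := Icc_mem_nhds hs.1 hs.2
    exact intervalIntegral.integral_hasDerivAt_left
      (hfℓint s T ⟨hs.1.le, hs.2.le⟩ ⟨hT', le_refl T⟩)
      ⟨Set.Icc 0 T, hmem, hfℓc.aestronglyMeasurable measurableSet_Icc⟩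
      (hfℓc.continuousAt hmem)
  have hw2' : ∀ s ∈ Set.Ioo (0:ℝ) T, HasDerivAt w (fw s) s := by
    intro s hs
    have hmem : Set.Icc (0:ℝ) T ∈ nhds s := Icc_mem_nhds hs.1 hs.2
    exact intervalIntegral.integral_hasDerivAt_right
      (hfwint 0 s ⟨le_refl 0, hT'⟩ ⟨hs.1.le, hs.2.le⟩)
      ⟨Set.Icc 0 T, hmem, hfwc.aestronglyMeasurable measurableSet_Icc⟩
      (hfwc.continuousAt hmem)
  -- FTC on g = F ⬝ᵥ w
  set G : ℝ → ℝ := fun s => -(fℓ s ⬝ᵥ w s) + F s ⬝ᵥ fw s with hGdef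
  have hGc : ContinuousOn G (Set.Icc 0 T) :=
    ((continuousOn_dot' hfℓc hwc).neg).add (continuousOn_dot' hFc hfwc)
  have hGint : IntervalIntegrable G volume 0 T := by
    rw [← huIcc] at hGc; exact hGc.intervalIntegrable
  have hg' : ∀ s ∈ Set.Ioo (0:ℝ) T,
      HasDerivWithinAt (fun s => F s ⬝ᵥ w s) (G s) (Set.Ioi s) s := by
    intro s hs
    have h := hasDerivWithinAt_dot' ((hF' s hs).hasDerivWithinAt (s := Set.Ioi s))
      ((hw2' s hs).hasDerivWithinAt (s := Set.Ioi s))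
    have heq : (-(fℓ s)) ⬝ᵥ w s + F s ⬝ᵥ fw s = G s := by
      rw [hGdef]; simp [neg_dotProduct]
    rwa [heq] at h
  have hgc : ContinuousOn (fun s => F s ⬝ᵥ w s) (Set.Icc 0 T) := continuousOn_dot' hFc hwc
  have hzero : (∫ s in (0:ℝ)..T, G s) = 0 := by
    rw [intervalIntegral.integral_eq_sub_of_hasDeriv_right_of_le hT' hgc hg' hGint,
      hFT, hw0]
    simp
  have hint1 : IntervalIntegrable (fun s => fℓ s ⬝ᵥ w s) volume 0 T := by
    have h := continuousOn_dot' hfℓc hwc; rw [← huIcc] at h; exact h.intervalIntegrable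
  have hint2 : IntervalIntegrable (fun s => F s ⬝ᵥ fw s) volume 0 T := by
    have h := continuousOn_dot' hFc hfwc; rw [← huIcc] at h; exact h.intervalIntegrable
  have hstar : (∫ s in (0:ℝ)..T, fℓ s ⬝ᵥ w s) = ∫ s in (0:ℝ)..T, F s ⬝ᵥ fw s := by
    have h2 : (∫ s in (0:ℝ)..T, G s)
        = (∫ s in (0:ℝ)..T, F s ⬝ᵥ fw s) - ∫ s in (0:ℝ)..T, fℓ s ⬝ᵥ w s := by
      rw [hGdef]
      simp only [neg_add_eq_sub]
      exact intervalIntegral.integral_sub hint2 hint1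
    rw [hzero] at h2
    linarith
  have hmv : IntervalIntegrable (fun t => m t ⬝ᵥ v t) volume 0 T := by
    have h := continuousOn_dot' hm hv; rw [← huIcc] at h; exact h.intervalIntegrable
  have hld : IntervalIntegrable (fun t => ℓ t ⬝ᵥ δ t) volume 0 T := by
    have h := continuousOn_dot' hℓ hδc; rw [← huIcc] at h; exact h.intervalIntegrable
  have hLHS : (∫ t in (0:ℝ)..T, (ℓ t ⬝ᵥ δ t + m t ⬝ᵥ v t))
      = (∫ s in (0:ℝ)..T, fℓ s ⬝ᵥ w s) + ∫ t in (0:ℝ)..T, m t ⬝ᵥ v t := by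
    rw [intervalIntegral.integral_add hld hmv]
    congr 1
    apply intervalIntegral.integral_congr
    intro t ht
    rw [huIcc] at ht
    show ℓ t ⬝ᵥ δ t = fℓ t ⬝ᵥ w t
    rw [hδη ht]
    show ℓ t ⬝ᵥ (Φ t *ᵥ w t) = ((Φ t)ᵀ *ᵥ ℓ t) ⬝ᵥ w t
    rw [Matrix.dotProduct_mulVec, Matrix.mulVec_transpose]
  have hRHS : (∫ s in (0:ℝ)..T,
        ((B s)ᵀ *ᵥ (∫ t in s..T, (Φ t * Ψ s)ᵀ *ᵥ ℓ t) + m s) ⬝ᵥ v s)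
      = (∫ s in (0:ℝ)..T, F s ⬝ᵥ fw s) + ∫ t in (0:ℝ)..T, m t ⬝ᵥ v t := by
    rw [← intervalIntegral.integral_add hint2 hmv]
    apply intervalIntegral.integral_congr
    intro s hs
    rw [huIcc] at hs
    have hsub : ∀ t, (Φ t * Ψ s)ᵀ *ᵥ ℓ t = (Ψ s)ᵀ *ᵥ fℓ t := by
      intro t
      rw [Matrix.transpose_mul, ← Matrix.mulVec_mulVec]
    have hpull : (∫ t in s..T, (Ψ s)ᵀ *ᵥ fℓ t) = (Ψ s)ᵀ *ᵥ F s := by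
      have h := (LinearMap.toContinuousLinearMap
          (Matrix.mulVecLin (Ψ s)ᵀ)).intervalIntegral_comp_comm
        (hfℓint s T hs ⟨hT', le_refl T⟩)
      simpa only [LinearMap.coe_toContinuousLinearMap', Matrix.mulVecLin_apply] using h
    simp only [hsub, hpull]
    rw [add_dotProduct]
    congr 1
    rw [Matrix.mulVec_transpose, Matrix.mulVec_transpose, ← Matrix.dotProduct_mulVec,
      ← Matrix.dotProduct_mulVec]
  rw [hLHS, hstar]
  exact hRHS.symm
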